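/- Let X be a real normed linear space, x ∈ X nonzero, and V a linear subspace of X. Then V ⊆ x^⊥_B if and only if there exists a support functional f ∈ J(x) such that V ⊆ ker f. -/

import Mathlib

/-- Birkhoff-James orthogonality. -/
def BJOrth {X : Type*} [NormedAddCommGroup X] [NormedSpace ℝ X] (x y : X) : Prop :=
  ∀ t : ℝ, ‖x‖ ≤ ‖x + t • y‖

/-- The set of support functionals at `x`. -/
def suppFun {X : Type*} [NormedAddCommGroup X] [NormedSpace ℝ X] (x : X) :
    Set (X →L[ℝ] ℝ) := {f | ‖f‖ = 1 ∧ f x = ‖x‖}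

theorem stmt_8 {X : Type*} [NormedAddCommGroup X] [NormedSpace ℝ X]
    (x : X) (hx : x ≠ 0) (V : Submodule ℝ X) :
    (∀ v ∈ V, BJOrth x v) ↔ ∃ f ∈ suppFun x, ∀ v ∈ V, f v = 0 := by
  constructor
  · intro h
    -- take closure of V
    set W := V.topologicalClosure with hW
    haveI : IsClosed (W : Set X) := V.isClosed_topologicalClosure
    -- norm of x in quotient equals ‖x‖
    have hball : ∀ w ∈ W, ‖x‖ ≤ ‖x + w‖ := by
      intro w hw
      have hcl : w ∈ closure (V : Set X) := hw
      have hcont : Continuous fun y : X => ‖x + y‖ := by continuity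
      have : ∀ y ∈ (V : Set X), ‖x‖ ≤ ‖x + y‖ := by
        intro y hy
        simpa using h y hy 1
      exact le_on_closure (f := fun y : X => (‖x‖ : ℝ)) (g := fun y : X => ‖x + y‖)
        this continuous_const.continuousOn hcont.continuousOn hcl
    have hnorm : ‖(Submodule.Quotient.mk x : X ⧸ W)‖ = ‖x‖ := by
      apply le_antisymm (Submodule.Quotient.norm_mk_le W x)
      rw [show ‖(Submodule.Quotient.mk x : X ⧸ W)‖ = Metric.infDist x (W : Set X) from
        QuotientAddGroup.norm_mk (S := W.toAddSubgroup) x]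
      rw [Metric.infDist_eq_iInf]
      apply le_ciInf
      rintro ⟨w, hw⟩
      have : ‖x‖ ≤ ‖x + -w‖ := hball (-w) (neg_mem hw)
      rw [dist_eq_norm]
      simpa [sub_eq_add_neg] using this
    have hxq : (Submodule.Quotient.mk x : X ⧸ W) ≠ 0 := by
      intro h0
      apply hx
      rw [← norm_eq_zero, ← hnorm, h0, norm_zero]
    obtain ⟨g, hg1, hg2⟩ := exists_dual_vector ℝ (Submodule.Quotient.mk x : X ⧸ W) (norm_ne_zero_iff.2 hxq)
    set π : X →L[ℝ] (X ⧸ W) := (W.mkQ).mkContinuous 1 (by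
      intro m; simpa using Submodule.Quotient.norm_mk_le W m)
    refine ⟨g.comp π, ⟨?_, ?_⟩, ?_⟩
    · apply le_antisymm
      · apply ContinuousLinearMap.opNorm_le_bound _ zero_le_one
        intro y
        calc ‖g (π y)‖ ≤ ‖g‖ * ‖π y‖ := g.le_opNorm _
          _ ≤ 1 * ‖y‖ := by
              rw [hg1, one_mul, one_mul]
              simpa [π] using Submodule.Quotient.norm_mk_le W y
      · have hval : (g.comp π) x = ‖x‖ := by
          simp only [ContinuousLinearMap.comp_apply]
          have hπ : π x = Submodule.Quotient.mk x := rfl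
          rw [hπ, hg2, hnorm]; simp
        have hxpos : (0:ℝ) < ‖x‖ := norm_pos_iff.2 hx
        have hle : ‖x‖ ≤ ‖g.comp π‖ * ‖x‖ := by
          calc ‖x‖ = (g.comp π) x := hval.symm
            _ ≤ ‖(g.comp π) x‖ := le_abs_self _
            _ ≤ ‖g.comp π‖ * ‖x‖ := (g.comp π).le_opNorm x
        exact le_of_mul_le_mul_right (by simpa [one_mul] using hle) hxpos
    · simp only [ContinuousLinearMap.comp_apply]
      have : π x = Submodule.Quotient.mk x := rfl
      rw [this, hg2, hnorm]; simp
    · intro v hv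
      have : π v = 0 := by
        have : (v : X) ∈ W := Submodule.le_topologicalClosure V hv
        simpa [π, Submodule.Quotient.mk_eq_zero] using (Submodule.Quotient.mk_eq_zero W).2 this
      simp [ContinuousLinearMap.comp_apply, this]
  · rintro ⟨f, ⟨hf1, hf2⟩, hfV⟩ v hv t
    have : f (x + t • v) = ‖x‖ := by
      rw [map_add, map_smul, hfV v hv, hf2]; ring_nf
    calc ‖x‖ = f (x + t • v) := this.symm
      _ ≤ ‖f‖ * ‖x + t • v‖ := by
          simpa using le_abs_self (f (x + t • v)) |>.trans (f.le_opNorm _ |>.trans_eq' (by rw [Real.norm_eq_abs]))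
      _ = ‖x + t • v‖ := by rw [hf1, one_mul]
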